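/- arXiv:0911.3043 — 5 statements merged into one kernel-verified Lean document; each statement's English description precedes it below -/
import Mathlib

section
/- With ψ(y) = (μ + κy)²/(2σ_M y − σ₋σ₊) on [σ₋, σ₊] and κ ≤ μ·σ_M/(σ_M σ₋ − σ₊σ₋) (note σ_M σ₋ − σ₊σ₋ < 0 when σ₋ < σ₊, so κ is negative and large in absolute value), the minimum of ψ over [σ₋, σ₊] is attained at y₂ = μ/κ + σ₋σ₊/σ_M ∈ [σ₋, σ₊], and the minimum value equals κ(2μσ_M + κσ₋σ₊)/σ_M². -/
/-- If κ ≤ μσ_M/(σ_M σ₋ − σ₊σ₋), then ψ(y) = (μ + κy)²/(2σ_M y − σ₋σ₊) attains its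
minimum over [σ₋, σ₊] at y₂ = μ/κ + σ₋σ₊/σ_M ∈ [σ₋, σ₊], with minimum value
κ(2μσ_M + κσ₋σ₊)/σ_M². -/
theorem psi_min_left_regime (σm σp μ κ : ℝ) (hσm : 0 < σm) (hσ : σm < σp) (hμ : 0 < μ)
    (hκ : κ ≤ μ * ((σm + σp) / 2) / (((σm + σp) / 2) * σm - σp * σm)) :
    (μ / κ + σm * σp / ((σm + σp) / 2) ∈ Set.Icc σm σp) ∧
    IsMinOn (fun y => (μ + κ * y) ^ 2 / (2 * ((σm + σp) / 2) * y - σm * σp))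
      (Set.Icc σm σp) (μ / κ + σm * σp / ((σm + σp) / 2)) ∧
    (μ + κ * (μ / κ + σm * σp / ((σm + σp) / 2))) ^ 2 /
        (2 * ((σm + σp) / 2) * (μ / κ + σm * σp / ((σm + σp) / 2)) - σm * σp) =
      κ * (2 * μ * ((σm + σp) / 2) + κ * σm * σp) / ((σm + σp) / 2) ^ 2 := by
  have hσp : 0 < σp := lt_trans hσm hσ
  have hσM : 0 < (σm + σp) / 2 := by linarith
  have hsum : σm + σp ≠ 0 := by positivity
  have hD : ((σm + σp) / 2) * σm - σp * σm < 0 := by nlinarith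
  have hκneg : κ < 0 :=
    lt_of_le_of_lt hκ (div_neg_of_pos_of_neg (by positivity) hD)
  have hineq : μ * ((σm + σp) / 2) ≤ κ * (((σm + σp) / 2) * σm - σp * σm) := by
    rw [le_div_iff_of_neg hD] at hκ
    linarith [hκ]
  have hκne : κ ≠ 0 := ne_of_lt hκneg
  have hσMne : ((σm + σp) / 2) ≠ 0 := ne_of_gt hσM
  -- E = 2μσM + κσmσp < 0
  have hE : 2 * μ * ((σm + σp) / 2) + κ * (σm * σp) < 0 := by
    nlinarith [mul_le_mul_of_nonneg_right hineq hσp.le,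
      mul_pos (mul_pos hμ hσM) hσm]
  have hEne : 2 * μ * ((σm + σp) / 2) + κ * (σm * σp) ≠ 0 := ne_of_lt hE
  -- membership
  have hmem : μ / κ + σm * σp / ((σm + σp) / 2) ∈ Set.Icc σm σp := by
    constructor
    · rw [show μ / κ + σm * σp / ((σm + σp) / 2) =
        (μ * ((σm + σp) / 2) + κ * (σm * σp)) / (κ * ((σm + σp) / 2)) by
          field_simp]
      rw [le_div_iff_of_neg (mul_neg_of_neg_of_pos hκneg hσM)]
      nlinarith
    · rw [show μ / κ + σm * σp / ((σm + σp) / 2) =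
        (μ * ((σm + σp) / 2) + κ * (σm * σp)) / (κ * ((σm + σp) / 2)) by
          field_simp]
      rw [div_le_iff_of_neg (mul_neg_of_neg_of_pos hκneg hσM)]
      nlinarith [mul_pos (neg_pos.mpr hκneg) (mul_pos hσp (by linarith : (0:ℝ) < (σp - σm) / 2))]
  -- value equality
  have h1 : μ + κ * (μ / κ + σm * σp / ((σm + σp) / 2)) =
      (2 * μ * ((σm + σp) / 2) + κ * (σm * σp)) / ((σm + σp) / 2) := by
    field_simp; ring
  have h2 : 2 * ((σm + σp) / 2) * (μ / κ + σm * σp / ((σm + σp) / 2)) - σm * σp =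
      (2 * μ * ((σm + σp) / 2) + κ * (σm * σp)) / κ := by
    field_simp; ring
  have hval : (μ + κ * (μ / κ + σm * σp / ((σm + σp) / 2))) ^ 2 /
        (2 * ((σm + σp) / 2) * (μ / κ + σm * σp / ((σm + σp) / 2)) - σm * σp) =
      κ * (2 * μ * ((σm + σp) / 2) + κ * σm * σp) / ((σm + σp) / 2) ^ 2 := by
    rw [h1, h2, div_eq_div_iff (div_ne_zero hEne hκne) (pow_ne_zero 2 hσMne)]
    field_simp
  refine ⟨hmem, ?_, hval⟩
  rw [isMinOn_iff]
  intro y hy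
  rw [hval]
  have hd : 0 < 2 * ((σm + σp) / 2) * y - σm * σp := by nlinarith [hy.1]
  rw [le_div_iff₀ hd, div_mul_eq_mul_div,
    div_le_iff₀ (by positivity : (0:ℝ) < ((σm + σp) / 2) ^ 2)]
  nlinarith [sq_nonneg (κ * ((σm + σp) / 2) * y - μ * ((σm + σp) / 2) - κ * (σm * σp))]
end

section
/- With ψ(y) = (μ + κy)²/(2σ_M y − σ₋σ₊) on [σ₋, σ₊], if μσ_M/(σ_M σ₋ − σ₊σ₋) < κ ≤ −μ/σ₋, then ψ is monotone increasing on [σ₋, σ₊] and its minimum over [σ₋, σ₊] is ψ(σ₋) = (μ + κσ₋)²/σ₋². -/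
/-- If μσ_M/(σ_M σ₋ − σ₊σ₋) < κ ≤ −μ/σ₋, then ψ(y) = (μ + κy)²/(2σ_M y − σ₋σ₊) is
monotone increasing on [σ₋, σ₊] and its minimum over [σ₋, σ₊] is ψ(σ₋) = (μ + κσ₋)²/σ₋². -/
theorem psi_increasing_regime (σm σp μ κ : ℝ) (hσm : 0 < σm) (hσ : σm < σp) (hμ : 0 < μ)
    (hκ1 : μ * ((σm + σp) / 2) / (((σm + σp) / 2) * σm - σp * σm) < κ)
    (hκ2 : κ ≤ -μ / σm) :
    MonotoneOn (fun y => (μ + κ * y) ^ 2 / (2 * ((σm + σp) / 2) * y - σm * σp))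
      (Set.Icc σm σp) ∧
    IsMinOn (fun y => (μ + κ * y) ^ 2 / (2 * ((σm + σp) / 2) * y - σm * σp))
      (Set.Icc σm σp) σm ∧
    (μ + κ * σm) ^ 2 / (2 * ((σm + σp) / 2) * σm - σm * σp) = (μ + κ * σm) ^ 2 / σm ^ 2 := by
  -- translate the hypotheses on κ into polynomial form
  have h1 : κ * σm + μ ≤ 0 := by
    linarith [(le_div_iff₀ hσm).mp hκ2]
  have h2 : κ * σm * (σm - σp) < μ * (σm + σp) := by
    have hden : ((σm + σp) / 2) * σm - σp * σm < 0 := by nlinarith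
    have := (div_lt_iff_of_neg hden).mp hκ1
    nlinarith [this]
  -- the key quadratic inequality in κ
  have hmin : κ ^ 2 * σm ^ 2 * (σm - σp) - 2 * μ * κ * σm * σp - μ ^ 2 * (σm + σp) ≥ 0 := by
    have hprod : (0:ℝ) ≤ (-(κ * σm + μ)) * (-(κ * σm * (σm - σp) - μ * (σm + σp))) :=
      mul_nonneg (by linarith) (by linarith)
    nlinarith [hprod]
  have hmono : MonotoneOn (fun y => (μ + κ * y) ^ 2 / (2 * ((σm + σp) / 2) * y - σm * σp))
      (Set.Icc σm σp) := by
    rintro x ⟨hx1, hx2⟩ y ⟨hy1, hy2⟩ hxy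
    have hDx : 0 < 2 * ((σm + σp) / 2) * x - σm * σp := by nlinarith
    have hDy : 0 < 2 * ((σm + σp) / 2) * y - σm * σp := by nlinarith
    simp only
    rw [div_le_div_iff₀ hDx hDy]
    nlinarith [mul_nonneg (mul_nonneg (sq_nonneg κ) (sub_nonneg.mpr hx1))
        (by nlinarith : (0:ℝ) ≤ (σm + σp) * y - σm * σp),
      mul_nonneg (mul_nonneg (sq_nonneg κ) (sub_nonneg.mpr hy1)) (sq_nonneg σm),
      mul_nonneg (sub_nonneg.mpr hxy) hmin,
      mul_nonneg (sub_nonneg.mpr hxy)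
        (mul_nonneg (mul_nonneg (sq_nonneg κ) (sub_nonneg.mpr hx1))
          (by nlinarith : (0:ℝ) ≤ (σm + σp) * y - σm * σp)),
      mul_nonneg (sub_nonneg.mpr hxy)
        (mul_nonneg (sq_nonneg κ) (mul_nonneg (sq_nonneg σm) (sub_nonneg.mpr hy1)))]
  refine ⟨hmono, ?_, by rw [show 2 * ((σm + σp) / 2) * σm - σm * σp = σm ^ 2 by ring]⟩
  intro y hy
  exact hmono (Set.left_mem_Icc.mpr (le_of_lt hσ)) hy hy.1
end

section
/- With ψ(y) = (μ + κy)²/(2σ_M y − σ₋σ₊) on [σ₋, σ₊], if −μ/σ₊ < κ ≤ μσ_M/(σ_M σ₊ − σ₊σ₋), then ψ is monotone decreasing on [σ₋, σ₊] and its minimum over [σ₋, σ₊] is ψ(σ₊) = (μ + κσ₊)²/σ₊². -/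
/-- If −μ/σ₊ < κ ≤ μσ_M/(σ_M σ₊ − σ₊σ₋), then ψ(y) = (μ + κy)²/(2σ_M y − σ₋σ₊) is
monotone decreasing on [σ₋, σ₊] and its minimum over [σ₋, σ₊] is ψ(σ₊) = (μ + κσ₊)²/σ₊². -/
theorem psi_decreasing_regime (σm σp μ κ : ℝ) (hσm : 0 < σm) (hσ : σm < σp) (hμ : 0 < μ)
    (hκ1 : -μ / σp < κ)
    (hκ2 : κ ≤ μ * ((σm + σp) / 2) / (((σm + σp) / 2) * σp - σp * σm)) :
    AntitoneOn (fun y => (μ + κ * y) ^ 2 / (2 * ((σm + σp) / 2) * y - σm * σp))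
      (Set.Icc σm σp) ∧
    IsMinOn (fun y => (μ + κ * y) ^ 2 / (2 * ((σm + σp) / 2) * y - σm * σp))
      (Set.Icc σm σp) σp ∧
    (μ + κ * σp) ^ 2 / (2 * ((σm + σp) / 2) * σp - σm * σp) = (μ + κ * σp) ^ 2 / σp ^ 2 := by
  have hσp : 0 < σp := hσm.trans hσ
  have h1 : 0 < μ + κ * σp := by
    have := (div_lt_iff₀ hσp).mp hκ1
    linarith
  have hden : (0:ℝ) < ((σm + σp) / 2) * σp - σp * σm := by nlinarith
  have h2 : κ * (σp * (σp - σm)) ≤ μ * (σm + σp) := by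
    have := (le_div_iff₀ hden).mp hκ2
    nlinarith
  have hkey : 0 ≤ (μ + κ * σp) * (μ * (σm + σp) - κ * (σp * (σp - σm))) :=
    mul_nonneg h1.le (by linarith)
  have hanti : AntitoneOn (fun y => (μ + κ * y) ^ 2 / (2 * ((σm + σp) / 2) * y - σm * σp))
      (Set.Icc σm σp) := by
    intro x hx y hy hxy
    have hdx : 0 < 2 * ((σm + σp) / 2) * x - σm * σp := by nlinarith [hx.1]
    have hdy : 0 < 2 * ((σm + σp) / 2) * y - σm * σp := by nlinarith [hy.1]
    rw [div_le_div_iff₀ hdy hdx]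
    have hyx : 0 ≤ y - x := by linarith
    have hD1 : 0 ≤ σp ^ 2 * (σp - y) := by nlinarith [hy.2]
    have hD2 : 0 ≤ (σp - x) * ((σm + σp) * y - σm * σp) := by
      apply mul_nonneg (by linarith [hx.2])
      nlinarith [hy.1]
    nlinarith [mul_nonneg hyx hkey,
      mul_nonneg (mul_nonneg (sq_nonneg κ) hyx) hD1,
      mul_nonneg (mul_nonneg (sq_nonneg κ) hyx) hD2]
  refine ⟨hanti, ?_, ?_⟩
  · intro y hy
    exact hanti hy (Set.right_mem_Icc.2 hσ.le) hy.2
  · congr 1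
    ring
end

section
/- With ψ(y) = (μ + κy)²/(2σ_M y − σ₋σ₊) on [σ₋, σ₊] and κ > μσ_M/(σ_M σ₊ − σ₊σ₋), the point y₂ = μ/κ + σ₋σ₊/σ_M lies in [σ₋, σ₊], ψ attains its minimum over [σ₋, σ₊] at y₂, and the minimum value equals κ(2μσ_M + κσ₋σ₊)/σ_M². -/
/-- If κ > μσ_M/(σ_M σ₊ − σ₊σ₋), then y₂ = μ/κ + σ₋σ₊/σ_M lies in [σ₋, σ₊], and
ψ(y) = (μ + κy)²/(2σ_M y − σ₋σ₊) attains its minimum over [σ₋, σ₊] at y₂, with minimum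
value κ(2μσ_M + κσ₋σ₊)/σ_M². -/
theorem psi_min_right_regime (σm σp μ κ : ℝ) (hσm : 0 < σm) (hσ : σm < σp) (hμ : 0 < μ)
    (hκ : μ * ((σm + σp) / 2) / (((σm + σp) / 2) * σp - σp * σm) < κ) :
    (μ / κ + σm * σp / ((σm + σp) / 2) ∈ Set.Icc σm σp) ∧
    IsMinOn (fun y => (μ + κ * y) ^ 2 / (2 * ((σm + σp) / 2) * y - σm * σp))
      (Set.Icc σm σp) (μ / κ + σm * σp / ((σm + σp) / 2)) ∧
    (μ + κ * (μ / κ + σm * σp / ((σm + σp) / 2))) ^ 2 /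
        (2 * ((σm + σp) / 2) * (μ / κ + σm * σp / ((σm + σp) / 2)) - σm * σp) =
      κ * (2 * μ * ((σm + σp) / 2) + κ * σm * σp) / ((σm + σp) / 2) ^ 2 := by
  have hσp : 0 < σp := hσm.trans hσ
  set σM : ℝ := (σm + σp) / 2 with hσMdef
  have hσM : 0 < σM := by positivity
  have hD : 0 < σM * σp - σp * σm := by
    have : σM * σp - σp * σm = σp * (σp - σm) / 2 := by rw [hσMdef]; ring
    have hd : 0 < σp - σm := sub_pos.mpr hσ
    rw [this]; positivity
  rw [div_lt_iff₀ hD] at hκ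
  have hκ0 : 0 < κ := by nlinarith [mul_pos hμ hσM]
  -- denominator at y₂ simplification
  have hy2den : 2 * σM * (μ / κ + σm * σp / σM) - σm * σp = 2 * σM * μ / κ + σm * σp := by
    field_simp
    ring
  have hy2denpos : 0 < 2 * σM * (μ / κ + σm * σp / σM) - σm * σp := by
    rw [hy2den]; positivity
  -- value at y₂
  have hval : (μ + κ * (μ / κ + σm * σp / σM)) ^ 2 /
        (2 * σM * (μ / κ + σm * σp / σM) - σm * σp) =
      κ * (2 * μ * σM + κ * σm * σp) / σM ^ 2 := by
    rw [div_eq_div_iff hy2denpos.ne' (by positivity : (σM:ℝ) ^ 2 ≠ 0)]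
    field_simp
    ring
  refine ⟨⟨?_, ?_⟩, ?_, hval⟩
  · -- σm ≤ y₂
    have h1 : σm ≤ σm * σp / σM := by
      rw [le_div_iff₀ hσM, hσMdef]; nlinarith
    have h2 : 0 < μ / κ := by positivity
    linarith
  · -- y₂ ≤ σp
    rw [div_add_div _ _ hκ0.ne' hσM.ne', div_le_iff₀ (by positivity)]
    nlinarith
  · -- minimality
    rw [isMinOn_iff]
    intro y hy
    obtain ⟨hy1, hy2⟩ := hy
    show (μ + κ * (μ / κ + σm * σp / σM)) ^ 2 /
        (2 * σM * (μ / κ + σm * σp / σM) - σm * σp) ≤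
      (μ + κ * y) ^ 2 / (2 * σM * y - σm * σp)
    rw [hval]
    have hdeny : 0 < 2 * σM * y - σm * σp := by
      have : σm * σm ≤ 2 * σM * y - σm * σp := by rw [hσMdef]; nlinarith
      nlinarith [mul_pos hσm hσm]
    rw [div_le_div_iff₀ (by positivity) hdeny]
    nlinarith [sq_nonneg (μ * σM + κ * σm * σp - κ * σM * y)]
end

section
/- Let (ξ,η) be a pair of random variables with values in K = [μ₋,μ₊]×[σ₋,σ₊] (0 ≤ μ₋ ≤ μ₊, 0 < σ₋ ≤ σ₊). Then the infimum of (Eξ + κEη)²/(Eη²) over all such pairs is attained by a pair (ξ*, η*) in which ξ* is a constant (equal to μ₋ or μ₊ or a value in between) and η* is a Bernoulli random variable with values in {σ₋, σ₊}; in particular the infimum equals min over (m, y) with m ∈ [μ₋,μ₊], y ∈ [σ₋,σ₊] of (m + κy)²/(2σ_M y − σ₋σ₊), where σ_M = (σ₋+σ₊)/2. -/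
open MeasureTheory

/-- The infimum of (Eξ + κEη)²/Eη² over pairs (ξ,η) of random variables with values in
K = [μ₋,μ₊]×[σ₋,σ₊] equals the minimum over (m,y) ∈ K of (m + κy)²/(2σ_M y − σ₋σ₊),
attained by a constant ξ* and a Bernoulli η* with values in {σ₋,σ₊}. -/
theorem infimum_ratio_reduction (μm μp σm σp κ : ℝ)
    (hμ0 : 0 ≤ μm) (hμ : μm ≤ μp) (hσ0 : 0 < σm) (hσ : σm ≤ σp) :
    letI S : Set ℝ := (fun q : ℝ × ℝ =>
      (q.1 + κ * q.2) ^ 2 / (2 * ((σm + σp) / 2) * q.2 - σm * σp)) ''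
        (Set.Icc μm μp ×ˢ Set.Icc σm σp)
    -- every admissible pair's ratio dominates the minimum of the reduced problem
    (∀ (Ω : Type) (_ : MeasurableSpace Ω) (P : Measure Ω), IsProbabilityMeasure P →
      ∀ ξ η : Ω → ℝ, Integrable ξ P → Integrable η P →
        Integrable (fun ω => (η ω) ^ 2) P →
        (∀ᵐ ω ∂P, ξ ω ∈ Set.Icc μm μp) → (∀ᵐ ω ∂P, η ω ∈ Set.Icc σm σp) →
        sInf S ≤ ((∫ ω, ξ ω ∂P) + κ * ∫ ω, η ω ∂P) ^ 2 / ∫ ω, (η ω) ^ 2 ∂P) ∧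
    -- every value of the reduced problem is attained by a constant ξ* and a Bernoulli η*
    (∀ m ∈ Set.Icc μm μp, ∀ y ∈ Set.Icc σm σp,
      ∃ (P : Measure Bool), IsProbabilityMeasure P ∧
        letI ξstar : Bool → ℝ := fun _ => m
        letI ηstar : Bool → ℝ := fun ω => if ω then σp else σm
        (∫ ω, ηstar ω ∂P = y) ∧
        ((∫ ω, ξstar ω ∂P) + κ * ∫ ω, ηstar ω ∂P) ^ 2 / (∫ ω, (ηstar ω) ^ 2 ∂P) =
          (m + κ * y) ^ 2 / (2 * ((σm + σp) / 2) * y - σm * σp)) := by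
  constructor
  · intro Ω _ P hP ξ η hξ hη hη2 hξb hηb
    set S : Set ℝ := (fun q : ℝ × ℝ =>
      (q.1 + κ * q.2) ^ 2 / (2 * ((σm + σp) / 2) * q.2 - σm * σp)) ''
        (Set.Icc μm μp ×ˢ Set.Icc σm σp) with hS
    set m := ∫ ω, ξ ω ∂P with hm
    set y := ∫ ω, η ω ∂P with hy
    have hconst : ∀ c : ℝ, ∫ _ : Ω, c ∂P = c := by
      intro c; simp
    have hm1 : μm ≤ m := by
      have := integral_mono_ae (integrable_const μm) hξ
        (hξb.mono fun ω hω => hω.1)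
      simpa using this
    have hm2 : m ≤ μp := by
      have := integral_mono_ae hξ (integrable_const μp)
        (hξb.mono fun ω hω => hω.2)
      simpa using this
    have hy1 : σm ≤ y := by
      have := integral_mono_ae (integrable_const σm) hη
        (hηb.mono fun ω hω => hω.1)
      simpa using this
    have hy2 : y ≤ σp := by
      have := integral_mono_ae hη (integrable_const σp)
        (hηb.mono fun ω hω => hω.2)
      simpa using this
    -- lower bound on second moment
    have hEη2_pos : 0 < ∫ ω, (η ω) ^ 2 ∂P := by
      have hle : σm ^ 2 ≤ ∫ ω, (η ω) ^ 2 ∂P := by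
        have := integral_mono_ae (integrable_const (σm ^ 2)) hη2
          (hηb.mono fun ω hω => by
          have h1 := hω.1; have h2 := hω.2
          show σm ^ 2 ≤ η ω ^ 2
          nlinarith)
        simpa using this
      nlinarith
    -- upper bound on second moment
    have hub : ∫ ω, (η ω) ^ 2 ∂P ≤ (σm + σp) * y - σm * σp := by
      have hint : Integrable (fun ω => (σm + σp) * η ω - σm * σp) P :=
        (hη.const_mul _).sub (integrable_const _)
      have := integral_mono_ae hη2 hint
        (hηb.mono fun ω hω => by
          have h1 := hω.1; have h2 := hω.2
          show η ω ^ 2 ≤ (σm + σp) * η ω - σm * σp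
          nlinarith [mul_nonneg (sub_nonneg.2 h2) (sub_nonneg.2 h1)])
      calc ∫ ω, (η ω) ^ 2 ∂P ≤ ∫ ω, ((σm + σp) * η ω - σm * σp) ∂P := this
        _ = (σm + σp) * y - σm * σp := by
            rw [integral_sub (hη.const_mul _) (integrable_const _),
              integral_const_mul, hconst]
    have hDpos : 0 < 2 * ((σm + σp) / 2) * y - σm * σp := by nlinarith
    have hmemS : (m + κ * y) ^ 2 / (2 * ((σm + σp) / 2) * y - σm * σp) ∈ S :=
      ⟨(m, y), ⟨⟨hm1, hm2⟩, ⟨hy1, hy2⟩⟩, rfl⟩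
    have hbdd : BddBelow S := by
      refine ⟨0, fun x hx => ?_⟩
      obtain ⟨q, hq, rfl⟩ := hx
      have hq2 : σm ≤ q.2 := hq.2.1
      have : 0 < 2 * ((σm + σp) / 2) * q.2 - σm * σp := by nlinarith
      positivity
    refine le_trans (csInf_le hbdd hmemS) ?_
    have hDle : ∫ ω, (η ω) ^ 2 ∂P ≤ 2 * ((σm + σp) / 2) * y - σm * σp := by
      calc ∫ ω, (η ω) ^ 2 ∂P ≤ (σm + σp) * y - σm * σp := hub
        _ = 2 * ((σm + σp) / 2) * y - σm * σp := by ring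
    exact div_le_div_of_nonneg_left (by positivity) hEη2_pos hDle
  · intro m hmK y hyK
    set p : ℝ := (y - σm) / (σp - σm) with hpdef
    have hp0 : 0 ≤ p := div_nonneg (by linarith [hyK.1]) (by linarith)
    have hp1 : p ≤ 1 := by
      rcases eq_or_lt_of_le hσ with h | h
      · simp [hpdef, ← h]
      · rw [div_le_one (by linarith)]; linarith [hyK.2]
    have hkey : p * (σp - σm) = y - σm := by
      rcases eq_or_lt_of_le hσ with h | h
      · have hy : y = σm := le_antisymm (h ▸ hyK.2) hyK.1
        simp [← h, hy]
      · rw [hpdef, div_mul_cancel₀]; linarith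
    haveI i1 : IsFiniteMeasure ((ENNReal.ofReal p) • Measure.dirac (true : Bool)) := by
      constructor
      rw [Measure.smul_apply, Measure.dirac_apply_of_mem (Set.mem_univ _), smul_eq_mul, mul_one]
      exact ENNReal.ofReal_lt_top
    haveI i2 : IsFiniteMeasure ((ENNReal.ofReal (1 - p)) • Measure.dirac (false : Bool)) := by
      constructor
      rw [Measure.smul_apply, Measure.dirac_apply_of_mem (Set.mem_univ _), smul_eq_mul, mul_one]
      exact ENNReal.ofReal_lt_top
    refine ⟨(ENNReal.ofReal p) • Measure.dirac true +
      (ENNReal.ofReal (1 - p)) • Measure.dirac false, ?_, ?_, ?_⟩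
    · constructor
      simp only [Measure.add_apply, Measure.smul_apply, smul_eq_mul,
        Measure.dirac_apply_of_mem (Set.mem_univ _), mul_one]
      rw [← ENNReal.ofReal_add hp0 (by linarith), show p + (1 - p) = 1 by ring]
      simp
    · rw [integral_add_measure (Integrable.of_finite) (Integrable.of_finite),
        integral_smul_measure, integral_smul_measure, integral_dirac, integral_dirac,
        ENNReal.toReal_ofReal hp0, ENNReal.toReal_ofReal (by linarith)]
      simp only [if_true, if_false, Bool.false_eq_true, smul_eq_mul]
      linear_combination hkey
    · have hη2 : ∫ ω, (if ω then σp else σm : ℝ) ^ 2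
          ∂((ENNReal.ofReal p) • Measure.dirac true +
            (ENNReal.ofReal (1 - p)) • Measure.dirac false)
          = 2 * ((σm + σp) / 2) * y - σm * σp := by
        rw [integral_add_measure (Integrable.of_finite) (Integrable.of_finite),
          integral_smul_measure, integral_smul_measure, integral_dirac, integral_dirac,
          ENNReal.toReal_ofReal hp0, ENNReal.toReal_ofReal (by linarith)]
        simp only [if_true, if_false, Bool.false_eq_true, smul_eq_mul]
        linear_combination (σp + σm) * hkey
      have hη1 : ∫ ω, (if ω then σp else σm : ℝ)
          ∂((ENNReal.ofReal p) • Measure.dirac true +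
            (ENNReal.ofReal (1 - p)) • Measure.dirac false) = y := by
        rw [integral_add_measure (Integrable.of_finite) (Integrable.of_finite),
          integral_smul_measure, integral_smul_measure, integral_dirac, integral_dirac,
          ENNReal.toReal_ofReal hp0, ENNReal.toReal_ofReal (by linarith)]
        simp only [if_true, if_false, Bool.false_eq_true, smul_eq_mul]
        linear_combination hkey
      have hξc : ∫ _ω : Bool, m
          ∂((ENNReal.ofReal p) • Measure.dirac true +
            (ENNReal.ofReal (1 - p)) • Measure.dirac false) = m := by
        rw [integral_add_measure (Integrable.of_finite) (Integrable.of_finite),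
          integral_smul_measure, integral_smul_measure, integral_dirac, integral_dirac,
          ENNReal.toReal_ofReal hp0, ENNReal.toReal_ofReal (by linarith)]
        simp only [smul_eq_mul]; ring
      rw [hη2, hη1, hξc]
end
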